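/- Fix n ≥ 1 and consider the Markov chain on the n-dimensional hypercube {false, true}ⁿ whose transition kernel, from state s, selects a coordinate i ∈ {1, …, n} uniformly at random and flips the i-th bit of s (so each of the n Hamming-neighbors of s is reached with probability 1/n). Start the chain at the all-false state and let T be the hitting time of the all-true state, defined on the trajectory measure of the chain. Then the expected value of T is at least 2^(n−1); in particular the hitting time of the exit state grows exponentially in n, i.e. it is Ω(2ⁿ). -/

import Mathlib

open MeasureTheory
open scoped ENNReal

open scoped NNReal

namespace HHT

def bs (n w : ℕ) : ℕ := ∑ j ∈ Finset.range (w+1), n.choose j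

noncomputable def dd (n w : ℕ) : ℝ≥0 :=
  ((n * bs n w : ℕ) : ℝ≥0) / (((n - w) * n.choose w : ℕ) : ℝ≥0)

noncomputable def gg (n w : ℕ) : ℝ≥0 := ∑ v ∈ Finset.Ico w n, dd n v

lemma bs_succ (n w : ℕ) : bs n (w+1) = bs n w + n.choose (w+1) := by
  simp [bs, Finset.sum_range_succ]

lemma K1 {n w : ℕ} (hw : w < n) :
    ((n - w : ℕ) : ℝ≥0) * dd n w = (n : ℝ≥0) + w * dd n (w-1) := by
  have hn0 : (n : ℝ≥0) ≠ 0 := by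
    have : 0 < n := by omega
    exact_mod_cast this.ne'
  rcases Nat.eq_zero_or_pos w with h0 | h1
  · subst h0
    simp only [dd, Nat.sub_zero, Nat.choose_zero_right, mul_one, Nat.cast_ofNat,
      Nat.cast_mul, CharP.cast_eq_zero, zero_mul, add_zero]
    have : bs n 0 = 1 := by simp [bs]
    rw [this]
    field_simp
    simp
  · obtain ⟨k, rfl⟩ := Nat.exists_eq_succ_of_ne_zero h1.ne'
    obtain ⟨m, hm⟩ : ∃ m, n = m + (k+1) := ⟨n - (k+1), by omega⟩
    have hm1 : 1 ≤ m := by omega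
    have hnw : n - (k+1) = m := by omega
    have hnk : n - k = m + 1 := by omega
    have hchoose : n.choose (k+1) * (k+1) = n.choose k * (m+1) := by
      rw [Nat.choose_succ_right_eq, hnk]
    have hc1 : n.choose (k+1) ≠ 0 := (Nat.choose_pos (by omega)).ne'
    have hc0 : n.choose k ≠ 0 := (Nat.choose_pos (by omega)).ne'
    have hm0 : m ≠ 0 := by omega
    have hwk1 : k + 1 - 1 = k := by omega
    rw [hwk1]
    unfold dd
    rw [hnw, hnk, bs_succ]
    have hm0' : (m:ℝ) ≠ 0 := Nat.cast_ne_zero.mpr hm0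
    have hc1' : ((n.choose (k+1) : ℕ):ℝ) ≠ 0 := Nat.cast_ne_zero.mpr hc1
    have hc0' : ((n.choose k : ℕ):ℝ) ≠ 0 := Nat.cast_ne_zero.mpr hc0
    rw [← NNReal.coe_inj]
    push_cast
    have h2 : ((n.choose (k+1) : ℕ) : ℝ) * (k+1) = (n.choose k : ℕ) * ((m:ℝ)+1) := by
      exact_mod_cast congrArg (Nat.cast : ℕ → ℝ) hchoose
    field_simp
    linear_combination (-((n:ℝ) * bs n k)) * h2

lemma gg_top (n : ℕ) : gg n n = 0 := by simp [gg]

lemma gg_split {n w : ℕ} (h : w < n) : gg n w = dd n w + gg n (w+1) := by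
  rw [gg, gg, Finset.sum_eq_sum_Ico_succ_bot h]

lemma gg_le_zero (n w : ℕ) : gg n w ≤ gg n 0 := by
  apply Finset.sum_le_sum_of_subset
  exact Finset.Ico_subset_Ico (Nat.zero_le w) le_rfl

lemma cast_sub_add {n w : ℕ} (h : w ≤ n) : ((n - w : ℕ) : ℝ≥0) + w = n := by
  exact_mod_cast congrArg (Nat.cast : ℕ → ℝ≥0) (Nat.sub_add_cancel h)

lemma C1 {n w : ℕ} (hw : w < n) :
    (n:ℝ≥0) * gg n w ≤ n + w * gg n (w-1) + ((n - w : ℕ):ℝ≥0) * gg n (w+1) := by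
  have hnw : (n:ℝ≥0) = ((n - w : ℕ) : ℝ≥0) + w := (cast_sub_add hw.le).symm
  have hK := K1 hw
  rcases Nat.eq_zero_or_pos w with h0 | h1
  · subst h0
    rw [gg_split hw]
    simp only [Nat.cast_zero, zero_mul, add_zero, Nat.sub_zero] at *
    rw [mul_add, hK]
  · have hsplit : gg n (w-1) = dd n (w-1) + dd n w + gg n (w+1) := by
      have h1' : w - 1 < n := by omega
      have : w - 1 + 1 = w := by omega
      rw [gg_split h1', this, gg_split hw, add_assoc]
    rw [gg_split hw, hsplit]
    have key : (n:ℝ≥0) * dd n w ≤ n + w * dd n (w-1) + w * dd n w := by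
      calc (n:ℝ≥0) * dd n w = ((n-w:ℕ):ℝ≥0) * dd n w + w * dd n w := by
            rw [hnw]; ring
        _ = (n + w * dd n (w-1)) + w * dd n w := by rw [hK]
        _ ≤ n + w * dd n (w-1) + w * dd n w := le_rfl
    calc (n:ℝ≥0) * (dd n w + gg n (w+1)) = n * dd n w + n * gg n (w+1) := by ring
      _ ≤ (n + w * dd n (w-1) + w * dd n w) + n * gg n (w+1) := by
          exact add_le_add_left key _
      _ = n + w * (dd n (w-1) + dd n w + gg n (w+1)) + ((n-w:ℕ):ℝ≥0) * gg n (w+1) := by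
          rw [hnw]; ring

lemma bs_last {n : ℕ} (hn : 1 ≤ n) : bs n (n-1) = 2^n - 1 := by
  have h1 : n - 1 + 1 = n := by omega
  have h2 : bs n (n-1) + n.choose n = 2^n := by
    rw [bs, h1, ← Finset.sum_range_succ]
    exact Nat.sum_range_choose n
  simp [Nat.choose_self] at h2
  omega

lemma dd_last {n : ℕ} (hn : 1 ≤ n) : dd n (n-1) = ((2^n - 1 : ℕ) : ℝ≥0) := by
  have hn0 : (n : ℝ≥0) ≠ 0 := by
    have : 0 < n := by omega
    exact_mod_cast this.ne'
  have h1 : n - (n-1) = 1 := by omega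
  have h2 : n.choose (n-1) = n := by
    have := Nat.choose_symm (Nat.sub_le n 1)
    rw [h1] at this
    rw [← this, Nat.choose_one_right]
  rw [dd, bs_last hn, h1, h2, one_mul]
  push_cast [Nat.one_le_two_pow]
  rw [mul_comm, mul_div_assoc, div_self hn0, mul_one]

lemma gg_zero_ge {n : ℕ} (hn : 1 ≤ n) : ((2^n - 1 : ℕ) : ℝ≥0) ≤ gg n 0 := by
  rw [← dd_last hn]
  apply Finset.single_le_sum (f := fun v => dd n v) (fun i _ => zero_le)
  simp [Finset.mem_Ico]; omega

variable {n : ℕ}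

abbrev St (n : ℕ) := Fin n → Bool

def exitS (n : ℕ) : St n := fun _ => true
def startS (n : ℕ) : St n := fun _ => false

noncomputable def ker (n : ℕ) (u v : St n) : ℝ≥0∞ :=
  if (Finset.univ.filter (fun j : Fin n => u j ≠ v j)).card = 1 then ((n : ℝ≥0∞))⁻¹ else 0

def wt (u : St n) : ℕ := (Finset.univ.filter (fun j => u j = true)).card

def flip (i : Fin n) (u : St n) : St n := Function.update u i (!u i)

lemma flip_diff (i : Fin n) (u : St n) :
    Finset.univ.filter (fun j => u j ≠ flip i u j) = {i} := by
  ext j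
  by_cases hj : j = i
  · subst hj
    simp [flip, Function.update]
  · simp [flip, Function.update, hj]

lemma ker_eq_sum (u v : St n) :
    ker n u v = ∑ i : Fin n, if v = flip i u then ((n : ℝ≥0∞))⁻¹ else 0 := by
  by_cases h : (Finset.univ.filter (fun j : Fin n => u j ≠ v j)).card = 1
  · obtain ⟨a, ha⟩ := Finset.card_eq_one.mp h
    have hva : v = flip a u := by
      funext j
      by_cases hj : j = a
      · subst hj
        have hj2 : j ∈ Finset.univ.filter (fun j : Fin n => u j ≠ v j) := by
          rw [ha]; exact Finset.mem_singleton_self j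
        simp only [Finset.mem_filter, Finset.mem_univ, true_and] at hj2
        simp only [flip, Function.update_self]
        revert hj2; cases u j <;> cases v j <;> simp
      · have hj2 : j ∉ Finset.univ.filter (fun j : Fin n => u j ≠ v j) := by
          rw [ha]; simp [hj]
        simp only [Finset.mem_filter, Finset.mem_univ, true_and, not_not] at hj2
        simp [flip, Function.update, hj, hj2.symm]
    have hiff : ∀ i : Fin n, v = flip i u ↔ i = a := by
      intro i
      constructor
      · intro hv
        have h1 : Finset.univ.filter (fun j : Fin n => u j ≠ v j) = {i} := by
          rw [hv]; exact flip_diff i u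
        have := h1.symm.trans ha
        exact Finset.singleton_injective this
      · rintro rfl; exact hva
    simp only [hiff]
    rw [Finset.sum_ite_eq' Finset.univ a (fun _ => ((n : ℝ≥0∞))⁻¹)]
    simp [ker, h]
  · have : ∀ i : Fin n, ¬(v = flip i u) := by
      intro i hv
      apply h
      rw [hv, flip_diff]
      simp
    simp only [this, if_false, Finset.sum_const_zero, ker, h, if_false]

lemma ker_sum (u : St n) (F : St n → ℝ≥0∞) :
    ∑ v : St n, ker n u v * F v = ∑ i : Fin n, ((n : ℝ≥0∞))⁻¹ * F (flip i u) := by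
  simp_rw [ker_eq_sum, Finset.sum_mul]
  rw [Finset.sum_comm]
  congr 1
  funext i
  simp only [ite_mul, zero_mul]
  rw [Finset.sum_ite_eq' Finset.univ (flip i u) (fun v => ((n : ℝ≥0∞))⁻¹ * F v)]
  simp

lemma wt_lt_of_ne_exit {u : St n} (h : u ≠ exitS n) : wt u < n := by
  have hle : wt u ≤ n := by
    have := Finset.card_filter_le (Finset.univ : Finset (Fin n)) (fun j => u j = true)
    simpa [wt] using this
  rcases lt_or_eq_of_le hle with h1 | h1
  · exact h1
  · exfalso
    apply h
    have hall : Finset.univ.filter (fun j => u j = true) = Finset.univ := by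
      apply Finset.eq_of_subset_of_card_le (Finset.filter_subset _ _)
      simp [wt] at h1
      simp [h1]
    funext j
    have : j ∈ Finset.univ.filter (fun j => u j = true) := by
      rw [hall]; exact Finset.mem_univ j
    simp only [Finset.mem_filter] at this
    simp [exitS, this.2]

lemma wt_start_eq : wt (startS n) = 0 := by
  simp [wt, startS]

lemma wt_exit_eq : wt (exitS n) = n := by
  simp [wt, exitS]

lemma wt_flip_true {i : Fin n} {u : St n} (h : u i = true) :
    wt (flip i u) + 1 = wt u := by
  have hfilter : Finset.univ.filter (fun j => flip i u j = true)
      = (Finset.univ.filter (fun j => u j = true)).erase i := by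
    ext j
    by_cases hj : j = i
    · subst hj
      simp [flip, Function.update, h]
    · simp [flip, Function.update, hj]
  rw [wt, hfilter, Finset.card_erase_add_one]
  · rfl
  · simp [h]

lemma wt_flip_false {i : Fin n} {u : St n} (h : u i = false) :
    wt (flip i u) = wt u + 1 := by
  have hfilter : Finset.univ.filter (fun j => flip i u j = true)
      = insert i (Finset.univ.filter (fun j => u j = true)) := by
    ext j
    by_cases hj : j = i
    · subst hj
      simp [flip, Function.update, h]
    · simp [flip, Function.update, hj]
  rw [wt, hfilter, Finset.card_insert_of_notMem]
  · rfl
  · simp [h]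

lemma card_false_eq (u : St n) :
    (Finset.univ.filter (fun j => u j = false)).card = n - wt u := by
  have h := Finset.card_filter_add_card_filter_not
    (s := (Finset.univ : Finset (Fin n))) (p := fun j => u j = true)
  have h2 : (Finset.univ.filter (fun j => ¬ (u j = true))).card
      = (Finset.univ.filter (fun j => u j = false)).card := by
    congr 1
    ext j
    cases hj : u j <;> simp [hj]
  simp only [Finset.card_univ, Fintype.card_fin] at h
  rw [h2] at h
  have hwt : wt u = (Finset.univ.filter (fun j => u j = true)).card := rfl
  omega

noncomputable def ggE (n w : ℕ) : ℝ≥0∞ := (gg n w : ℝ≥0∞)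

lemma flip_sum (u : St n) :
    ∑ i : Fin n, ggE n (wt (flip i u))
      = (wt u : ℝ≥0∞) * ggE n (wt u - 1) + ((n - wt u : ℕ) : ℝ≥0∞) * ggE n (wt u + 1) := by
  rw [← Finset.sum_filter_add_sum_filter_not Finset.univ (fun i => u i = true)]
  have h1 : ∀ i ∈ Finset.univ.filter (fun i => u i = true),
      ggE n (wt (flip i u)) = ggE n (wt u - 1) := by
    intro i hi
    simp only [Finset.mem_filter, Finset.mem_univ, true_and] at hi
    have := wt_flip_true hi
    congr 1
    omega
  have h2 : ∀ i ∈ Finset.univ.filter (fun i => ¬ (u i = true)),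
      ggE n (wt (flip i u)) = ggE n (wt u + 1) := by
    intro i hi
    simp only [Finset.mem_filter, Finset.mem_univ, true_and, Bool.not_eq_true] at hi
    rw [wt_flip_false hi]
  rw [Finset.sum_congr rfl h1, Finset.sum_congr rfl h2, Finset.sum_const, Finset.sum_const]
  have hcard1 : (Finset.univ.filter (fun i => u i = true)).card = wt u := rfl
  have hcard2 : (Finset.univ.filter (fun i => ¬ (u i = true))).card = n - wt u := by
    rw [← card_false_eq u]
    congr 1
    ext j
    cases hj : u j <;> simp [hj]
  rw [hcard1, hcard2, nsmul_eq_mul, nsmul_eq_mul]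

lemma step_ineq (hn : 1 ≤ n) (u : St n) (hu : u ≠ exitS n) :
    ggE n (wt u) ≤ 1 + ∑ v : St n, ker n u v * ggE n (wt v) := by
  have hw : wt u < n := wt_lt_of_ne_exit hu
  have hn0 : ((n : ℝ≥0∞)) ≠ 0 := by
    simp only [ne_eq, Nat.cast_eq_zero]; omega
  have hnt : ((n : ℝ≥0∞)) ≠ ⊤ := ENNReal.natCast_ne_top n
  rw [ker_sum u (fun v => ggE n (wt v)), ← Finset.mul_sum, flip_sum]
  have hC := C1 hw
  have hC' : (n : ℝ≥0∞) * ggE n (wt u) ≤ (n : ℝ≥0∞) +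
      ((wt u : ℝ≥0∞) * ggE n (wt u - 1) + ((n - wt u : ℕ) : ℝ≥0∞) * ggE n (wt u + 1)) := by
    rw [← add_assoc]
    simp only [ggE]
    exact_mod_cast hC
  calc ggE n (wt u) = (n : ℝ≥0∞)⁻¹ * ((n : ℝ≥0∞) * ggE n (wt u)) := by
        rw [← mul_assoc, ENNReal.inv_mul_cancel hn0 hnt, one_mul]
    _ ≤ (n : ℝ≥0∞)⁻¹ * ((n : ℝ≥0∞) +
        ((wt u : ℝ≥0∞) * ggE n (wt u - 1) + ((n - wt u : ℕ) : ℝ≥0∞) * ggE n (wt u + 1))) :=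
        mul_le_mul_right hC' _
    _ = (n : ℝ≥0∞)⁻¹ * (n : ℝ≥0∞) + (n : ℝ≥0∞)⁻¹ *
        ((wt u : ℝ≥0∞) * ggE n (wt u - 1) + ((n - wt u : ℕ) : ℝ≥0∞) * ggE n (wt u + 1)) :=
        mul_add _ _ _
    _ = 1 + (n : ℝ≥0∞)⁻¹ *
        ((wt u : ℝ≥0∞) * ggE n (wt u - 1) + ((n - wt u : ℕ) : ℝ≥0∞) * ggE n (wt u + 1)) := by
        rw [ENNReal.inv_mul_cancel hn0 hnt]

lemma ggE_exit : ggE n n = 0 := by simp [ggE, gg_top]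

lemma ggE_le_zero (w : ℕ) : ggE n w ≤ ggE n 0 := by
  simp only [ggE, ENNReal.coe_le_coe]
  exact gg_le_zero n w

lemma ggE_ne_top (w : ℕ) : ggE n w ≠ ⊤ := ENNReal.coe_ne_top

lemma pow_le_ggE (hn : 1 ≤ n) : (2 : ℝ≥0∞) ^ (n-1) ≤ ggE n 0 := by
  have h1 : (2:ℕ) ^ (n-1) ≤ 2 ^ n - 1 := by
    have h2 : 2 ^ (n-1) + 2 ^ (n-1) = 2 ^ n := by
      have hh : n - 1 + 1 = n := by omega
      conv_rhs => rw [← hh]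
      rw [pow_succ]
      omega
    have h3 : 1 ≤ 2 ^ (n-1) := Nat.one_le_two_pow
    omega
  calc (2 : ℝ≥0∞) ^ (n-1) = ((2 ^ (n-1) : ℕ) : ℝ≥0∞) := by push_cast; ring
    _ ≤ ((2 ^ n - 1 : ℕ) : ℝ≥0∞) := by exact_mod_cast h1
    _ ≤ ggE n 0 := by
        simp only [ggE]
        exact_mod_cast gg_zero_ge hn

open MeasureTheory

open scoped Classical in
noncomputable def dummy := 0

section Meas

variable {n : ℕ} (μ : Measure (ℕ → St n))

def Cyl (t : ℕ) (p : ℕ → St n) : Set (ℕ → St n) := {ω | ∀ i ≤ t, ω i = p i}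

def Ev (n : ℕ) (t : ℕ) : Set (ℕ → St n) := {ω | ∀ s < t, ω s ≠ exitS n}

lemma coord_meas (i : ℕ) (v : St n) : MeasurableSet {ω : ℕ → St n | ω i = v} :=
  (measurable_pi_apply (X := fun _ : ℕ => St n) i) (MeasurableSet.singleton v)

lemma cyl_meas (t : ℕ) (p : ℕ → St n) : MeasurableSet (Cyl t p) := by
  have : Cyl t p = ⋂ (i : ℕ) (_ : i ≤ t), {ω : ℕ → St n | ω i = p i} := by
    ext ω; simp [Cyl]
  rw [this]
  exact MeasurableSet.iInter fun i => MeasurableSet.iInter fun _ => coord_meas i (p i)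

lemma ev_meas (t : ℕ) : MeasurableSet (Ev n t) := by
  have : Ev n t = ⋂ (s : ℕ) (_ : s < t), {ω : ℕ → St n | ω s = exitS n}ᶜ := by
    ext ω; simp [Ev]
  rw [this]
  exact MeasurableSet.iInter fun s => MeasurableSet.iInter fun _ =>
    (coord_meas s (exitS n)).compl

def extd (t : ℕ) (q : Fin (t+1) → St n) : ℕ → St n :=
  fun i => if h : i < t + 1 then q ⟨i, h⟩ else exitS n

lemma extd_le {t : ℕ} (q : Fin (t+1) → St n) {i : ℕ} (hi : i ≤ t) :
    extd t q i = q ⟨i, by omega⟩ := by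
  simp [extd, Nat.lt_succ_of_le hi]

open scoped Classical in
noncomputable def Fq (t : ℕ) (A : Set (ℕ → St n)) : Finset (Fin (t+1) → St n) :=
  Finset.univ.filter (fun q => extd t q ∈ A)

lemma decomp (t : ℕ) (A : Set (ℕ → St n))
    (hA : ∀ ω ω', (∀ i ≤ t, ω i = ω' i) → ω ∈ A → ω' ∈ A) :
    A = ⋃ q ∈ Fq t A, Cyl t (extd t q) := by
  classical
  ext ω
  constructor
  · intro hω
    have hmem : (fun i : Fin (t+1) => ω i.1) ∈ Fq t A := by
      simp only [Fq, Finset.mem_filter, Finset.mem_univ, true_and]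
      apply hA ω _ _ hω
      intro i hi
      rw [extd_le _ hi]
    have hcyl : ω ∈ Cyl t (extd t (fun i : Fin (t+1) => ω i.1)) := by
      intro i hi
      rw [extd_le _ hi]
    exact Set.mem_biUnion hmem hcyl
  · intro hω
    obtain ⟨q, hq, hωq⟩ := Set.mem_iUnion₂.mp hω
    simp only [Fq, Finset.mem_filter, Finset.mem_univ, true_and] at hq
    exact hA (extd t q) ω (fun i hi => (hωq i hi).symm) hq

lemma cyl_disj (t : ℕ) {q q' : Fin (t+1) → St n} (h : q ≠ q') :
    Disjoint (Cyl t (extd t q)) (Cyl t (extd t q')) := by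
  rw [Set.disjoint_left]
  intro ω h1 h2
  apply h
  funext i
  have e1 := h1 i.1 (Nat.lt_succ_iff.mp i.isLt)
  have e2 := h2 i.1 (Nat.lt_succ_iff.mp i.isLt)
  rw [extd_le _ (Nat.lt_succ_iff.mp i.isLt)] at e1 e2
  simp only [Fin.eta] at e1 e2
  rw [← e1, ← e2]

lemma measure_decomp (t : ℕ) (A : Set (ℕ → St n))
    (hA : ∀ ω ω', (∀ i ≤ t, ω i = ω' i) → ω ∈ A → ω' ∈ A) :
    μ A = ∑ q ∈ Fq t A, μ (Cyl t (extd t q)) := by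
  conv_lhs => rw [decomp t A hA]
  refine measure_biUnion_finset ?_ (fun q _ => cyl_meas t (extd t q))
  intro q _ q' _ hqq'
  exact cyl_disj t hqq'

end Meas

section Meas2

variable {n : ℕ} (μ : Measure (ℕ → St n))

lemma cyl_inter (t : ℕ) (p : ℕ → St n) (v : St n) :
    Cyl t p ∩ {ω | ω (t+1) = v} = Cyl (t+1) (Function.update p (t+1) v) := by
  ext ω
  constructor
  · rintro ⟨h1, h2⟩ i hi
    rcases Nat.lt_succ_iff_lt_or_eq.mp (Nat.lt_succ_of_le hi) with h | h
    · rw [Function.update_of_ne (by omega), h1 i (by omega)]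
    · subst h
      rw [Function.update_self]
      exact h2
  · intro h
    constructor
    · intro i hi
      have := h i (by omega)
      rwa [Function.update_of_ne (by omega)] at this
    · have := h (t+1) le_rfl
      rwa [Function.update_self] at this

variable (hcyl' : ∀ (t : ℕ) (p : ℕ → St n), μ (Cyl t p) =
    if p 0 = startS n then ∏ i ∈ Finset.range t, ker n (p i) (p (i+1)) else 0)

include hcyl'

lemma cyl_ext (t : ℕ) (p : ℕ → St n) (v : St n) :
    μ (Cyl (t+1) (Function.update p (t+1) v)) = μ (Cyl t p) * ker n (p t) v := by
  rw [hcyl' (t+1) _, hcyl' t p]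
  have h0 : Function.update p (t+1) v 0 = p 0 := Function.update_of_ne (by omega) _ _
  rw [h0]
  by_cases hs : p 0 = startS n
  · simp only [hs, if_true]
    rw [Finset.prod_range_succ]
    congr 1
    · apply Finset.prod_congr rfl
      intro i hi
      simp only [Finset.mem_range] at hi
      rw [Function.update_of_ne (by omega), Function.update_of_ne (by omega)]
    · rw [Function.update_of_ne (by omega), Function.update_self]
  · simp [hs]

lemma markov (t : ℕ) (u v : St n) :
    μ (Ev n t ∩ {ω | ω t = u} ∩ {ω | ω (t+1) = v})
      = μ (Ev n t ∩ {ω | ω t = u}) * ker n u v := by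
  classical
  set A := Ev n t ∩ {ω | ω t = u} with hAdef
  have hA : ∀ ω ω', (∀ i ≤ t, ω i = ω' i) → ω ∈ A → ω' ∈ A := by
    rintro ω ω' hagree ⟨hev, hu⟩
    constructor
    · show ω' ∈ Ev n t
      intro s hs
      rw [← hagree s hs.le]
      exact hev s hs
    · show ω' t = u
      rw [← hagree t le_rfl]
      exact hu
  have h2 : A ∩ {ω | ω (t+1) = v}
      = ⋃ q ∈ Fq t A, Cyl (t+1) (Function.update (extd t q) (t+1) v) := by
    conv_lhs => rw [decomp t A hA]
    rw [Set.iUnion₂_inter]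
    exact Set.iUnion₂_congr fun q _ => cyl_inter t (extd t q) v
  have hsub : ∀ q : Fin (t+1) → St n,
      Cyl (t+1) (Function.update (extd t q) (t+1) v) ⊆ Cyl t (extd t q) := by
    intro q
    rw [← cyl_inter]
    exact Set.inter_subset_left
  rw [h2, measure_biUnion_finset ?hd ?hm]
  case hd =>
    intro q _ q' _ hqq'
    exact ((cyl_disj t hqq').mono (hsub q) (hsub q'))
  case hm =>
    exact fun q _ => cyl_meas _ _
  have hlast : ∀ q ∈ Fq t A, extd t q t = u := by
    intro q hq
    simp only [Fq, Finset.mem_filter, Finset.mem_univ, true_and] at hq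
    exact hq.2
  calc ∑ q ∈ Fq t A, μ (Cyl (t+1) (Function.update (extd t q) (t+1) v))
      = ∑ q ∈ Fq t A, μ (Cyl t (extd t q)) * ker n u v := by
        apply Finset.sum_congr rfl
        intro q hq
        rw [cyl_ext μ hcyl' t (extd t q) v, hlast q hq]
    _ = (∑ q ∈ Fq t A, μ (Cyl t (extd t q))) * ker n u v := by
        rw [Finset.sum_mul]
    _ = μ A * ker n u v := by
        rw [← measure_decomp μ t A hA]

end Meas2

section Meas3

variable {n : ℕ} (μ : Measure (ℕ → St n))

noncomputable def aF (t : ℕ) (v : St n) : ℝ≥0∞ := μ (Ev n t ∩ {ω | ω t = v})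

lemma ev_zero : Ev n 0 = Set.univ := by
  ext ω; simp [Ev]

lemma ev_succ (t : ℕ) : Ev n (t+1) = Ev n t ∩ {ω | ω t ≠ exitS n} := by
  ext ω
  simp only [Ev, Set.mem_inter_iff, Set.mem_setOf_eq]
  constructor
  · intro h
    exact ⟨fun s hs => h s (by omega), h t (by omega)⟩
  · rintro ⟨h1, h2⟩ s hs
    rcases Nat.lt_succ_iff_lt_or_eq.mp hs with h | h
    · exact h1 s h
    · subst h; exact h2

lemma aev_meas (t : ℕ) (v : St n) : MeasurableSet (Ev n t ∩ {ω : ℕ → St n | ω t = v}) :=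
  (ev_meas t).inter (coord_meas t v)

lemma sum_aF (t : ℕ) : ∑ v : St n, aF μ t v = μ (Ev n t) := by
  have hpart : Ev n t = ⋃ v ∈ (Finset.univ : Finset (St n)), (Ev n t ∩ {ω | ω t = v}) := by
    ext ω
    simp only [Set.mem_iUnion, Set.mem_inter_iff, Set.mem_setOf_eq, Finset.mem_univ]
    constructor
    · intro h; exact ⟨ω t, trivial, h, rfl⟩
    · rintro ⟨v, _, h, _⟩; exact h
  conv_rhs => rw [hpart]
  rw [measure_biUnion_finset ?hd ?hm]
  case hd =>
    intro v _ v' _ hvv'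
    simp only [Function.onFun]
    rw [Set.disjoint_left]
    rintro ω ⟨_, h1⟩ ⟨_, h2⟩
    exact hvv' (h1.symm.trans h2)
  case hm => exact fun v _ => aev_meas t v
  rfl

lemma sum_aF_ne (t : ℕ) :
    ∑ v ∈ Finset.univ.erase (exitS n), aF μ t v = μ (Ev n (t+1)) := by
  have hpart : Ev n (t+1)
      = ⋃ v ∈ (Finset.univ.erase (exitS n)), (Ev n t ∩ {ω | ω t = v}) := by
    rw [ev_succ]
    ext ω
    simp only [Set.mem_iUnion, Set.mem_inter_iff, Set.mem_setOf_eq, Finset.mem_erase,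
      Finset.mem_univ, and_true]
    constructor
    · rintro ⟨h1, h2⟩
      exact ⟨ω t, h2, h1, rfl⟩
    · rintro ⟨v, hv, h, rfl⟩
      exact ⟨h, hv⟩
  conv_rhs => rw [hpart]
  rw [measure_biUnion_finset ?hd ?hm]
  case hd =>
    intro v _ v' _ hvv'
    simp only [Function.onFun]
    rw [Set.disjoint_left]
    rintro ω ⟨_, h1⟩ ⟨_, h2⟩
    exact hvv' (h1.symm.trans h2)
  case hm => exact fun v _ => aev_meas t v
  rfl

variable (hcyl' : ∀ (t : ℕ) (p : ℕ → St n), μ (Cyl t p) =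
    if p 0 = startS n then ∏ i ∈ Finset.range t, ker n (p i) (p (i+1)) else 0)

include hcyl'

lemma aF_zero (v : St n) : aF μ 0 v = if v = startS n then 1 else 0 := by
  have h1 : Ev n 0 ∩ {ω : ℕ → St n | ω 0 = v} = Cyl 0 (fun _ => v) := by
    rw [ev_zero, Set.univ_inter]
    ext ω
    simp only [Set.mem_setOf_eq, Cyl]
    constructor
    · intro h i hi
      rw [Nat.le_zero.mp hi]
      exact h
    · intro h
      exact h 0 le_rfl
  rw [aF, h1, hcyl' 0 _]
  simp

lemma aF_succ (t : ℕ) (v : St n) :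
    aF μ (t+1) v = ∑ u ∈ Finset.univ.erase (exitS n), aF μ t u * ker n u v := by
  have hpart : Ev n (t+1) ∩ {ω : ℕ → St n | ω (t+1) = v}
      = ⋃ u ∈ (Finset.univ.erase (exitS n)),
          (Ev n t ∩ {ω | ω t = u} ∩ {ω | ω (t+1) = v}) := by
    rw [ev_succ]
    ext ω
    simp only [Set.mem_iUnion, Set.mem_inter_iff, Set.mem_setOf_eq, Finset.mem_erase,
      Finset.mem_univ, and_true]
    constructor
    · rintro ⟨⟨h1, h2⟩, h3⟩
      exact ⟨ω t, h2, ⟨⟨h1, rfl⟩, h3⟩⟩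
    · rintro ⟨u, hu, ⟨⟨h1, h2⟩, h3⟩⟩
      exact ⟨⟨h1, h2 ▸ hu⟩, h3⟩
  rw [aF, hpart, measure_biUnion_finset ?hd ?hm]
  case hd =>
    intro u _ u' _ huu'
    simp only [Function.onFun]
    rw [Set.disjoint_left]
    rintro ω ⟨⟨_, h1⟩, _⟩ ⟨⟨_, h2⟩, _⟩
    exact huu' (h1.symm.trans h2)
  case hm =>
    exact fun u _ => ((ev_meas t).inter (coord_meas t u)).inter (coord_meas (t+1) v)
  exact Finset.sum_congr rfl fun u _ => markov μ hcyl' t u v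

end Meas3

section Phi

variable {n : ℕ} (μ : Measure (ℕ → St n))

noncomputable def Phi (t : ℕ) : ℝ≥0∞ := ∑ v : St n, aF μ t v * ggE n (wt v)

lemma phi_erase (t : ℕ) :
    Phi μ t = ∑ v ∈ Finset.univ.erase (exitS n), aF μ t v * ggE n (wt v) := by
  rw [Phi, ← Finset.sum_erase_add Finset.univ _ (Finset.mem_univ (exitS n))]
  rw [wt_exit_eq, ggE_exit, mul_zero, add_zero]

variable (hcyl' : ∀ (t : ℕ) (p : ℕ → St n), μ (Cyl t p) =
    if p 0 = startS n then ∏ i ∈ Finset.range t, ker n (p i) (p (i+1)) else 0)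

include hcyl'

lemma phi_zero (hn : 1 ≤ n) : Phi μ 0 = ggE n 0 := by
  rw [Phi]
  have : ∀ v : St n, aF μ 0 v * ggE n (wt v)
      = if v = startS n then ggE n (wt v) else 0 := by
    intro v
    rw [aF_zero μ hcyl']
    split <;> simp
  rw [Finset.sum_congr rfl (fun v _ => this v)]
  rw [Finset.sum_ite_eq' Finset.univ (startS n) (fun v => ggE n (wt v))]
  simp [wt_start_eq]

lemma phi_step (hn : 1 ≤ n) (t : ℕ) :
    Phi μ t ≤ μ (Ev n (t+1)) + Phi μ (t+1) := by
  rw [phi_erase]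
  have hstep : ∀ v ∈ Finset.univ.erase (exitS n),
      aF μ t v * ggE n (wt v)
        ≤ aF μ t v + ∑ u : St n, aF μ t v * (ker n v u * ggE n (wt u)) := by
    intro v hv
    have hv' : v ≠ exitS n := (Finset.mem_erase.mp hv).1
    calc aF μ t v * ggE n (wt v)
        ≤ aF μ t v * (1 + ∑ u : St n, ker n v u * ggE n (wt u)) :=
          mul_le_mul_right (step_ineq hn v hv') _
      _ = aF μ t v + ∑ u : St n, aF μ t v * (ker n v u * ggE n (wt u)) := by
          rw [mul_add, mul_one, Finset.mul_sum]
  calc ∑ v ∈ Finset.univ.erase (exitS n), aF μ t v * ggE n (wt v)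
      ≤ ∑ v ∈ Finset.univ.erase (exitS n),
          (aF μ t v + ∑ u : St n, aF μ t v * (ker n v u * ggE n (wt u))) :=
        Finset.sum_le_sum hstep
    _ = (∑ v ∈ Finset.univ.erase (exitS n), aF μ t v)
        + ∑ v ∈ Finset.univ.erase (exitS n), ∑ u : St n,
            aF μ t v * (ker n v u * ggE n (wt u)) := Finset.sum_add_distrib
    _ = μ (Ev n (t+1)) + Phi μ (t+1) := by
        rw [sum_aF_ne]
        congr 1
        rw [Finset.sum_comm]
        rw [Phi]
        apply Finset.sum_congr rfl
        intro u _
        rw [aF_succ μ hcyl', Finset.sum_mul]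
        apply Finset.sum_congr rfl
        intro v _
        ring

lemma telescope (hn : 1 ≤ n) (t : ℕ) :
    ggE n 0 ≤ ∑ j ∈ Finset.range t, μ (Ev n (j+1)) + Phi μ t := by
  induction t with
  | zero => simp [phi_zero μ hcyl' hn]
  | succ t ih =>
    calc ggE n 0 ≤ ∑ j ∈ Finset.range t, μ (Ev n (j+1)) + Phi μ t := ih
      _ ≤ ∑ j ∈ Finset.range t, μ (Ev n (j+1)) + (μ (Ev n (t+1)) + Phi μ (t+1)) :=
          add_le_add_right (phi_step μ hcyl' hn t) _
      _ = ∑ j ∈ Finset.range (t+1), μ (Ev n (j+1)) + Phi μ (t+1) := by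
          rw [Finset.sum_range_succ]; ring

lemma phi_le (t : ℕ) : Phi μ t ≤ ggE n 0 * μ (Ev n t) := by
  calc Phi μ t ≤ ∑ v : St n, aF μ t v * ggE n 0 :=
        Finset.sum_le_sum (fun v _ => mul_le_mul_right (ggE_le_zero _) _)
    _ = ggE n 0 * μ (Ev n t) := by
        rw [← Finset.sum_mul, sum_aF, mul_comm]

end Phi

section Integral

variable {n : ℕ} (μ : Measure (ℕ → St n))

noncomputable def TT (n : ℕ) (ω : ℕ → St n) : ℝ≥0∞ :=
  ⨅ (t : ℕ) (_ : ω t = fun _ => true), (t : ℝ≥0∞)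

lemma sum_ind_le_TT (t : ℕ) (ω : ℕ → St n) :
    ∑ j ∈ Finset.range t, (Ev n (j+1)).indicator (fun _ => (1:ℝ≥0∞)) ω ≤ TT n ω := by
  classical
  by_cases h : ∃ s, ω s = exitS n
  · set m := Nat.find h with hm
    have hmex : ω m = exitS n := Nat.find_spec h
    have h1 : (m : ℝ≥0∞) ≤ TT n ω := by
      refine le_iInf fun s => le_iInf fun hs => ?_
      have : m ≤ s := Nat.find_min' h hs
      exact_mod_cast this
    refine le_trans ?_ h1
    calc ∑ j ∈ Finset.range t, (Ev n (j+1)).indicator (fun _ => (1:ℝ≥0∞)) ω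
        ≤ ∑ j ∈ Finset.range t, (if j < m then (1:ℝ≥0∞) else 0) := by
          apply Finset.sum_le_sum
          intro j _
          by_cases hj : ω ∈ Ev n (j+1)
          · have hjm : j < m := by
              by_contra hcon
              exact hj m (by omega) hmex
            rw [Set.indicator_of_mem hj]
            simp [hjm]
          · rw [Set.indicator_of_notMem hj]
            exact zero_le
      _ = ((Finset.range t).filter (fun j => j < m)).card • (1:ℝ≥0∞) := by
          rw [← Finset.sum_filter, Finset.sum_const]
      _ ≤ (m : ℝ≥0∞) := by
          rw [nsmul_eq_mul, mul_one]
          have hsub : (Finset.range t).filter (fun j => j < m) ⊆ Finset.range m := by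
            intro j hj
            simp only [Finset.mem_filter, Finset.mem_range] at hj ⊢
            omega
          have := Finset.card_le_card hsub
          rw [Finset.card_range] at this
          exact_mod_cast this
  · have hT : TT n ω = ⊤ := by
      push_neg at h
      have h' : ∀ s : ℕ, ¬ (ω s = fun _ => true) := by
        intro s
        exact h s
      simp [TT, h']
    rw [hT]
    exact le_top

lemma sum_ev_le_lintegral (t : ℕ) :
    ∑ j ∈ Finset.range t, μ (Ev n (j+1)) ≤ ∫⁻ ω, TT n ω ∂μ := by
  have hmeas : ∀ j : ℕ, Measurable ((Ev n (j+1)).indicator (fun _ : ℕ → St n => (1:ℝ≥0∞))) :=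
    fun j => measurable_const.indicator (ev_meas (j+1))
  calc ∑ j ∈ Finset.range t, μ (Ev n (j+1))
      = ∑ j ∈ Finset.range t, ∫⁻ ω, (Ev n (j+1)).indicator (fun _ => (1:ℝ≥0∞)) ω ∂μ := by
        apply Finset.sum_congr rfl
        intro j _
        rw [lintegral_indicator (ev_meas (j+1))]
        simp
    _ = ∫⁻ ω, ∑ j ∈ Finset.range t, (Ev n (j+1)).indicator (fun _ => (1:ℝ≥0∞)) ω ∂μ := by
        rw [lintegral_finset_sum _ (fun j _ => hmeas j)]
    _ ≤ ∫⁻ ω, TT n ω ∂μ := lintegral_mono (fun ω => sum_ind_le_TT t ω)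

lemma ev_antitone {s t : ℕ} (h : s ≤ t) : Ev n t ⊆ Ev n s := by
  intro ω hω
  intro j hj
  exact hω j (by omega)

end Integral

end HHT


/-- Random walk on the `n`-dimensional hypercube `Fin n → Bool`: from a state `s` a
coordinate is chosen uniformly at random and flipped, so each of the `n` Hamming
neighbors of `s` is reached with probability `1/n`. Let `μ` be the trajectory measure
of the chain started at the all-`false` state (the measure on `ℕ → (Fin n → Bool)`
produced by the Ionescu–Tulcea construction), characterized here by its cylinder
probabilities: the probability that the first `t + 1` coordinates follow `path` equals
`∏_{i < t} p(path i, path (i+1))` if `path 0` is the all-`false` start, and `0`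
otherwise, where `p(s, s') = 1/n` if `s` and `s'` differ in exactly one bit and `0`
otherwise. Let `T` be the hitting time of the all-`true` state, i.e. the least `t` with
`X t = exit` (and `∞` if there is no such `t`). Then `𝔼[T] ≥ 2 ^ (n - 1)`: the expected
hitting time of the exit state grows exponentially in `n`, i.e. it is `Ω(2 ^ n)`. -/
theorem hypercube_hitting_time_exponential (n : ℕ) (hn : 1 ≤ n)
    (μ : Measure (ℕ → (Fin n → Bool))) [IsProbabilityMeasure μ]
    (hcyl : ∀ (t : ℕ) (path : ℕ → (Fin n → Bool)),
      μ {ω | ∀ i ≤ t, ω i = path i} =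
        if path 0 = (fun _ => false) then
          ∏ i ∈ Finset.range t,
            (if (Finset.univ.filter (fun j : Fin n => path i j ≠ path (i + 1) j)).card = 1
              then ((n : ℝ≥0∞))⁻¹ else 0)
        else 0) :
    (2 : ℝ≥0∞) ^ (n - 1) ≤
      ∫⁻ ω, (⨅ (t : ℕ) (_ : ω t = fun _ => true), (t : ℝ≥0∞)) ∂μ := by
  classical
  have hcyl' : ∀ (t : ℕ) (p : ℕ → HHT.St n), μ (HHT.Cyl t p) =
      if p 0 = HHT.startS n then ∏ i ∈ Finset.range t, HHT.ker n (p i) (p (i+1)) else 0 := by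
    intro t p
    rw [show HHT.startS n = (fun _ => false) from rfl]
    simpa [HHT.Cyl, HHT.ker, HHT.startS] using hcyl t p
  show (2 : ℝ≥0∞) ^ (n - 1) ≤ ∫⁻ ω, HHT.TT n ω ∂μ
  set I := ∫⁻ ω, HHT.TT n ω ∂μ with hI
  rcases eq_or_ne I ⊤ with htop | hfin
  · rw [htop]; exact le_top
  refine le_trans (HHT.pow_le_ggE hn) ?_
  -- key inequality for each t
  have hkey : ∀ t : ℕ, HHT.ggE n 0 ≤ I + HHT.ggE n 0 * μ (HHT.Ev n t) := by
    intro t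
    calc HHT.ggE n 0
        ≤ ∑ j ∈ Finset.range t, μ (HHT.Ev n (j+1)) + HHT.Phi μ t :=
          HHT.telescope μ hcyl' hn t
      _ ≤ I + HHT.ggE n 0 * μ (HHT.Ev n t) :=
          add_le_add (HHT.sum_ev_le_lintegral μ t) (HHT.phi_le μ hcyl' t)
  have hmul : ∀ t : ℕ, (t : ℝ≥0∞) * μ (HHT.Ev n t) ≤ I := by
    intro t
    calc (t : ℝ≥0∞) * μ (HHT.Ev n t)
        = ∑ _j ∈ Finset.range t, μ (HHT.Ev n t) := by
          rw [Finset.sum_const, Finset.card_range, nsmul_eq_mul]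
      _ ≤ ∑ j ∈ Finset.range t, μ (HHT.Ev n (j+1)) := by
          apply Finset.sum_le_sum
          intro j hj
          simp only [Finset.mem_range] at hj
          exact measure_mono (HHT.ev_antitone (by omega))
      _ ≤ I := HHT.sum_ev_le_lintegral μ t
  apply ENNReal.le_of_forall_pos_le_add
  intro ε hε _
  have hε0 : (ε : ℝ≥0∞) ≠ 0 := by exact_mod_cast hε.ne'
  set c := HHT.ggE n 0 * I with hc
  have hcne : c ≠ ⊤ := ENNReal.mul_ne_top (HHT.ggE_ne_top 0) hfin
  obtain ⟨N, hN⟩ := ENNReal.exists_nat_gt (ENNReal.div_lt_top hcne hε0).ne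
  have hN0 : N ≠ 0 := by
    rintro rfl
    simp at hN
  have hcN : c ≤ (N : ℝ≥0∞) * ε := by
    have h1 : c / (ε:ℝ≥0∞) * ε = c := ENNReal.div_mul_cancel hε0 ENNReal.coe_ne_top
    calc c = c / (ε:ℝ≥0∞) * ε := h1.symm
      _ ≤ (N : ℝ≥0∞) * ε := mul_le_mul_left hN.le _
  have hbound : HHT.ggE n 0 * μ (HHT.Ev n N) ≤ (ε : ℝ≥0∞) := by
    by_contra hcon
    push_neg at hcon
    have hNne : (N : ℝ≥0∞) ≠ 0 := by exact_mod_cast hN0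
    have hNt : (N : ℝ≥0∞) ≠ ⊤ := ENNReal.natCast_ne_top N
    have h2 : (N:ℝ≥0∞) * ε < (N:ℝ≥0∞) * (HHT.ggE n 0 * μ (HHT.Ev n N)) :=
      (ENNReal.mul_lt_mul_iff_right hNne hNt).mpr hcon
    have h3 : (N:ℝ≥0∞) * (HHT.ggE n 0 * μ (HHT.Ev n N)) ≤ c := by
      calc (N:ℝ≥0∞) * (HHT.ggE n 0 * μ (HHT.Ev n N))
          = HHT.ggE n 0 * ((N:ℝ≥0∞) * μ (HHT.Ev n N)) := by ring
        _ ≤ HHT.ggE n 0 * I := mul_le_mul_right (hmul N) _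
    exact absurd (h2.trans_le (h3.trans hcN)) (lt_irrefl _)
  calc HHT.ggE n 0 ≤ I + HHT.ggE n 0 * μ (HHT.Ev n N) := hkey N
    _ ≤ I + ε := add_le_add_right hbound _
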